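/- arXiv:1907.02404 — 6 statements merged into one kernel-verified Lean document; each statement's English description precedes it below -/
import Mathlib

section
/- Let V = W# H# where V ∈ ℝ^{F×N} has rank(V) = K, W# ∈ ℝ^{F×K} is entrywise nonnegative with each column summing to one (i.e., eᵀW# = eᵀ), and H# ∈ ℝ^{K×N} is entrywise nonnegative and satisfies the sufficiently scattered condition. Then every optimal solution (Ŵ, Ĥ) of the problem: minimize logdet(ŴᵀŴ) over Ŵ ∈ ℝ^{F×K}, Ĥ ∈ ℝ^{K×N} subject to V = ŴĤ, Ŵᵀe = e, and Ĥ ≥ 0, satisfies Ŵ = W#Π and Ĥ = ΠᵀH# for some K×K permutation matrix Π; that is, the model recovers (W#, H#) up to permutation of the rank-one factors. -/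
set_option maxHeartbeats 1000000



open Matrix

/-- The conic hull of the columns of a matrix `H`. -/
def coneH {K N : ℕ} (H : Matrix (Fin K) (Fin N) ℝ) : Set (Fin K → ℝ) :=
  {x | ∃ θ : Fin N → ℝ, (∀ n, 0 ≤ θ n) ∧ x = H.mulVec θ}

/-- The dual cone of a set `C ⊆ ℝ^K`. -/
def dualCone {K : ℕ} (C : Set (Fin K → ℝ)) : Set (Fin K → ℝ) :=
  {y | ∀ x ∈ C, 0 ≤ ∑ i, x i * y i}

/-- The second-order cone `𝒞 = {x : xᵀe ≥ √(K−1)·‖x‖₂}`. -/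
def secondOrderCone (K : ℕ) : Set (Fin K → ℝ) :=
  {x | Real.sqrt (K - 1) * Real.sqrt (∑ i, (x i) ^ 2) ≤ ∑ i, x i}

/-- The dual of the second-order cone: `𝒞* = {x : xᵀe ≥ ‖x‖₂}`. -/
def secondOrderConeDual (K : ℕ) : Set (Fin K → ℝ) :=
  {x | Real.sqrt (∑ i, (x i) ^ 2) ≤ ∑ i, x i}

/-- The sufficiently scattered condition for a nonnegative matrix `H ∈ ℝ₊^{K×N}`:
(1) `𝒞 ⊆ cone(H)`, and
(2) `cone(H)* ∩ bd(𝒞*) = {λ e_k : λ ≥ 0, k = 1,…,K}`. -/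
def SufficientlyScattered {K N : ℕ} (H : Matrix (Fin K) (Fin N) ℝ) : Prop :=
  secondOrderCone K ⊆ coneH H ∧
  dualCone (coneH H) ∩ frontier (secondOrderConeDual K) =
    {x | ∃ (k : Fin K) (lam : ℝ), 0 ≤ lam ∧ x = fun i => lam * (if i = k then (1 : ℝ) else 0)}

lemma aux_soc_dual {K : ℕ} (hK : 2 ≤ K) (q : Fin K → ℝ)
    (hq : ∀ x ∈ secondOrderCone K, 0 ≤ ∑ i, x i * q i) :
    Real.sqrt (∑ i, (q i)^2) ≤ ∑ i, q i := by
  set Kr : ℝ := (K : ℝ) with hKr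
  have hKr2 : (2:ℝ) ≤ Kr := by rw [hKr]; exact_mod_cast hK
  have hKrpos : (0:ℝ) < Kr := by linarith
  have hK1 : (0:ℝ) < Kr - 1 := by linarith
  set s : ℝ := ∑ i, q i with hs_def
  have he : (fun _ : Fin K => (1:ℝ)) ∈ secondOrderCone K := by
    simp only [secondOrderCone, Set.mem_setOf_eq, one_pow, Finset.sum_const,
      Finset.card_univ, Fintype.card_fin, nsmul_eq_mul, mul_one, ← hKr]
    rw [← Real.sqrt_mul (by linarith)]
    calc Real.sqrt ((Kr - 1) * Kr) ≤ Real.sqrt (Kr ^ 2) := by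
          apply Real.sqrt_le_sqrt; nlinarith
      _ = Kr := Real.sqrt_sq hKrpos.le
  have hs : 0 ≤ s := by
    have := hq _ he
    simpa [hs_def] using this
  set r : Fin K → ℝ := fun i => q i - s / Kr with hr_def
  have hr_sum : ∑ i, r i = 0 := by
    simp only [hr_def, Finset.sum_sub_distrib, Finset.sum_const, Finset.card_univ,
      Fintype.card_fin, nsmul_eq_mul]
    field_simp
    rw [← hs_def, ← hKr]; ring
  set R2 : ℝ := ∑ i, r i ^ 2 with hR2_def
  have hR2_nonneg : 0 ≤ R2 := Finset.sum_nonneg fun i _ => sq_nonneg _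
  have hq_eq : ∀ i, q i = r i + s / Kr := fun i => by simp [hr_def]
  have hsum_q_sq : ∑ i, q i ^ 2 = R2 + s ^ 2 / Kr := by
    have h1 : ∀ i, q i ^ 2 = r i ^ 2 + 2 * (s / Kr) * r i + (s / Kr) ^ 2 := by
      intro i; rw [hq_eq i]; ring
    rw [Finset.sum_congr rfl fun i _ => h1 i]
    rw [Finset.sum_add_distrib, Finset.sum_add_distrib, ← Finset.mul_sum, hr_sum,
      Finset.sum_const, Finset.card_univ, Fintype.card_fin, nsmul_eq_mul]
    field_simp
    ring
  have key : R2 * Kr ≤ s ^ 2 * (Kr - 1) := by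
    rcases eq_or_lt_of_le hR2_nonneg with h0 | hR2pos
    · rw [← h0, zero_mul]; positivity
    · set c : ℝ := Real.sqrt (Kr / (Kr - 1)) / Real.sqrt R2 with hc_def
      have hcpos : 0 < c :=
        div_pos (Real.sqrt_pos.2 (by positivity)) (Real.sqrt_pos.2 hR2pos)
      have hc_sq : c ^ 2 = (Kr / (Kr - 1)) / R2 := by
        rw [hc_def, div_pow, Real.sq_sqrt (by positivity), Real.sq_sqrt hR2_nonneg]
      have hc2R2 : c ^ 2 * R2 = Kr / (Kr - 1) := by
        rw [hc_sq]; field_simp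
      set x : Fin K → ℝ := fun i => 1 - c * r i with hx_def
      have hx_sum : ∑ i, x i = Kr := by
        simp only [hx_def, Finset.sum_sub_distrib, Finset.sum_const, Finset.card_univ,
          Fintype.card_fin, nsmul_eq_mul, mul_one, ← Finset.mul_sum, hr_sum, mul_zero, sub_zero]
        exact hKr.symm
      have hx_sq : ∑ i, x i ^ 2 = Kr + c ^ 2 * R2 := by
        have h1 : ∀ i, x i ^ 2 = 1 - 2 * c * r i + c ^ 2 * r i ^ 2 := by
          intro i; simp only [hx_def]; ring
        rw [Finset.sum_congr rfl fun i _ => h1 i]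
        rw [Finset.sum_add_distrib, Finset.sum_sub_distrib, Finset.sum_const, Finset.card_univ,
          Fintype.card_fin, nsmul_eq_mul, mul_one, ← Finset.mul_sum, hr_sum, mul_zero, sub_zero,
          ← Finset.mul_sum]
      have hx_mem : x ∈ secondOrderCone K := by
        simp only [secondOrderCone, Set.mem_setOf_eq, ← hKr, hx_sum, hx_sq, hc2R2]
        rw [← Real.sqrt_mul hK1.le]
        have heq : (Kr - 1) * (Kr + Kr / (Kr - 1)) = Kr ^ 2 := by field_simp; ring
        rw [heq, Real.sqrt_sq hKrpos.le]
      have hrq : ∑ i, r i * q i = R2 := by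
        have h1 : ∀ i, r i * q i = r i ^ 2 + (s / Kr) * r i := by
          intro i; rw [hq_eq i]; ring
        rw [Finset.sum_congr rfl fun i _ => h1 i, Finset.sum_add_distrib, ← Finset.mul_sum,
          hr_sum, mul_zero, add_zero]
      have hxq : ∑ i, x i * q i = s - c * R2 := by
        have h1 : ∀ i, x i * q i = q i - c * (r i * q i) := by
          intro i; simp only [hx_def]; ring
        rw [Finset.sum_congr rfl fun i _ => h1 i, Finset.sum_sub_distrib, ← Finset.mul_sum,
          Finset.sum_congr rfl fun i _ => rfl, hrq, ← hs_def]
      have hle : c * R2 ≤ s := by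
        have := hq x hx_mem
        rw [hxq] at this; linarith
      have ht : c * R2 = Real.sqrt (Kr / (Kr - 1)) * Real.sqrt R2 := by
        rw [hc_def, div_mul_eq_mul_div, mul_div_assoc, Real.div_sqrt]
      have ht2 : (c * R2) ^ 2 = (Kr / (Kr - 1)) * R2 := by
        rw [ht, mul_pow, Real.sq_sqrt (by positivity), Real.sq_sqrt hR2_nonneg]
      have hsq : (Kr / (Kr - 1)) * R2 ≤ s ^ 2 := by
        rw [← ht2]
        exact pow_le_pow_left₀ (by positivity) hle 2
      rw [div_mul_eq_mul_div, div_le_iff₀ hK1] at hsq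
      nlinarith
  calc Real.sqrt (∑ i, q i ^ 2) ≤ Real.sqrt (s ^ 2) := by
        apply Real.sqrt_le_sqrt
        rw [hsum_q_sq]
        have hdiv : s ^ 2 / Kr * Kr = s ^ 2 := div_mul_cancel₀ _ hKrpos.ne'
        nlinarith [key, hdiv, hKrpos, hR2_nonneg]
    _ = s := Real.sqrt_sq hs

lemma aux_frontier {K : ℕ} (hK : 2 ≤ K) (q : Fin K → ℝ)
    (h : Real.sqrt (∑ i, (q i)^2) = ∑ i, q i) :
    q ∈ frontier (secondOrderConeDual K) := by
  have hKr2 : (2:ℝ) ≤ (K:ℝ) := by exact_mod_cast hK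
  have hKrpos : (0:ℝ) < (K:ℝ) := by linarith
  set s : ℝ := ∑ i, q i with hs_def
  have hs : 0 ≤ s := h ▸ Real.sqrt_nonneg _
  have hq2 : ∑ i, q i ^ 2 = s ^ 2 := by
    have h2 : 0 ≤ ∑ i, q i ^ 2 := Finset.sum_nonneg fun i _ => sq_nonneg (q i)
    have h3 := Real.sq_sqrt h2
    rw [h] at h3
    linarith
  rw [frontier]
  constructor
  · exact subset_closure (by simpa [secondOrderConeDual] using h.le)
  · intro hint
    rw [mem_interior_iff_mem_nhds, Metric.mem_nhds_iff] at hint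
    obtain ⟨ε, hε, hball⟩ := hint
    -- choose t > 0 small
    rcases eq_or_lt_of_le hs with hs0 | hs0
    · -- s = 0, so q = 0; take x = q - (ε/2) • 1
      set t : ℝ := ε / 2 with ht_def
      have ht : 0 < t := by positivity
      set x : Fin K → ℝ := fun i => q i - t with hx_def
      have hx_mem : x ∈ secondOrderConeDual K := by
        apply hball
        rw [Metric.mem_ball, dist_pi_lt_iff hε]
        intro i
        simp only [hx_def, Real.dist_eq, sub_sub_cancel_left, abs_neg, abs_of_pos ht]
        rw [ht_def]; linarith
      have hx_sum : ∑ i, x i = s - K * t := by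
        simp [hx_def, Finset.sum_sub_distrib, hs_def, mul_comm]
      have : Real.sqrt (∑ i, x i ^ 2) ≤ s - K * t := hx_mem.out.trans_eq hx_sum
      have hneg : s - K * t < 0 := by
        rw [← hs0]; simp only [zero_sub, neg_neg, neg_lt_zero]; positivity
      linarith [Real.sqrt_nonneg (∑ i, x i ^ 2), this]
    · -- s > 0
      set t : ℝ := min (ε / 2) (s / K) with ht_def
      have ht : 0 < t := lt_min (by positivity) (by positivity)
      have htK : (K:ℝ) * t ≤ s := by
        have : t ≤ s / K := min_le_right _ _
        rw [le_div_iff₀ hKrpos] at this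
        linarith
      set x : Fin K → ℝ := fun i => q i - t with hx_def
      have hx_mem : x ∈ secondOrderConeDual K := by
        apply hball
        rw [Metric.mem_ball, dist_pi_lt_iff hε]
        intro i
        simp only [hx_def, Real.dist_eq, sub_sub_cancel_left, abs_neg, abs_of_pos ht]
        exact lt_of_le_of_lt (min_le_left _ _) (by linarith)
      have hx_sum : ∑ i, x i = s - K * t := by
        simp [hx_def, Finset.sum_sub_distrib, hs_def, mul_comm]
      have hx_sq : ∑ i, x i ^ 2 = s ^ 2 - 2 * t * s + K * t ^ 2 := by
        have h1 : ∀ i, x i ^ 2 = q i ^ 2 - 2 * t * q i + t ^ 2 := by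
          intro i; simp only [hx_def]; ring
        rw [Finset.sum_congr rfl fun i _ => h1 i, Finset.sum_add_distrib,
          Finset.sum_sub_distrib, ← Finset.mul_sum, hq2, Finset.sum_const, Finset.card_univ,
          Fintype.card_fin, nsmul_eq_mul, ← hs_def]
      have hle : Real.sqrt (∑ i, x i ^ 2) ≤ s - K * t := hx_mem.out.trans_eq hx_sum
      have hnn : 0 ≤ ∑ i, x i ^ 2 := Finset.sum_nonneg fun i _ => sq_nonneg _
      have hsql : ∑ i, x i ^ 2 ≤ (s - K * t) ^ 2 := by
        have := Real.sq_sqrt hnn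
        nlinarith [Real.sqrt_nonneg (∑ i, x i ^ 2)]
      rw [hx_sq] at hsql
      nlinarith [mul_pos (mul_pos (show (0:ℝ) < (K:ℝ) - 1 by linarith) ht)
        (show 0 < 2 * s - (K:ℝ) * t by linarith)]

lemma aux_hadamard {K : ℕ} (B : Matrix (Fin K) (Fin K) ℝ) :
    |B.det| ≤ ∏ k, Real.sqrt (∑ i, (B k i)^2) := by
  classical
  set f : Fin K → EuclideanSpace ℝ (Fin K) := fun k => (WithLp.equiv 2 _).symm (B k) with hf
  have hrank : Module.finrank ℝ (EuclideanSpace ℝ (Fin K)) = Fintype.card (Fin K) := by simp [finrank_euclideanSpace]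
  haveI : WellFoundedLT (Fin K) := inferInstance
  set b : OrthonormalBasis (Fin K) ℝ (EuclideanSpace ℝ (Fin K)) :=
    InnerProductSpace.gramSchmidtOrthonormalBasis hrank f with hb
  set e := EuclideanSpace.basisFun (Fin K) ℝ with he
  have hnorm : ∀ k, ‖f k‖ = Real.sqrt (∑ i, (B k i)^2) := by
    intro k
    rw [EuclideanSpace.norm_eq]
    congr 1
    exact Finset.sum_congr rfl fun i _ => by
      simp [hf, WithLp.equiv_symm_apply, Real.norm_eq_abs, sq_abs]
  have hmat : e.toBasis.toMatrix f = Bᵀ := by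
    ext i j
    rw [Module.Basis.toMatrix_apply]
    simp [he, hf, transpose_apply]
  have hsplit : e.toBasis.toMatrix f = e.toBasis.toMatrix b.toBasis * b.toBasis.toMatrix f :=
    (Module.Basis.toMatrix_mul_toMatrix e.toBasis b.toBasis f).symm
  have hdetBt : Bᵀ.det = (e.toBasis.toMatrix b.toBasis).det * (b.toBasis.toMatrix f).det := by
    rw [← hmat, hsplit, det_mul]
  have hpm : |(e.toBasis.toMatrix b.toBasis).det| = 1 := by
    have h1 : (e.toBasis.toMatrix b.toBasis).det = e.toBasis.det b.toBasis := by
      rw [Module.Basis.det_apply]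
    rcases e.det_to_matrix_orthonormalBasis_real b with h2 | h2 <;> rw [h1] <;>
      simp [OrthonormalBasis.coe_toBasis, h2]
  have hgs : (b.toBasis.toMatrix f).det = ∏ i, inner ℝ (b i) (f i) := by
    rw [← Module.Basis.det_apply]
    exact InnerProductSpace.gramSchmidtOrthonormalBasis_det hrank f
  have hbound : |(b.toBasis.toMatrix f).det| ≤ ∏ k, Real.sqrt (∑ i, (B k i)^2) := by
    rw [hgs, Finset.abs_prod]
    apply Finset.prod_le_prod (fun i _ => abs_nonneg _)
    intro i _
    calc |inner ℝ (b i) (f i)| ≤ ‖b i‖ * ‖f i‖ := abs_real_inner_le_norm _ _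
      _ = Real.sqrt (∑ j, (B i j)^2) := by rw [b.orthonormal.1 i, one_mul, hnorm]
  calc |B.det| = |Bᵀ.det| := by rw [det_transpose]
    _ = |(e.toBasis.toMatrix b.toBasis).det| * |(b.toBasis.toMatrix f).det| := by
        rw [hdetBt, abs_mul]
    _ ≤ ∏ k, Real.sqrt (∑ i, (B k i)^2) := by rw [hpm, one_mul]; exact hbound

lemma aux_amgm {K : ℕ} (hK : 0 < K) (s : Fin K → ℝ) (h0 : ∀ k, 0 ≤ s k)
    (hsum : ∑ k, s k = K) : ∏ k, s k ≤ 1 := by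
  have hKrpos : (0:ℝ) < (K:ℝ) := by exact_mod_cast hK
  have h := Real.geom_mean_le_arith_mean Finset.univ (fun _ => (1:ℝ)) s
    (fun _ _ => zero_le_one) (by simp [hKrpos]) (fun k _ => h0 k)
  simp only [Real.rpow_one, one_mul, Finset.sum_const, Finset.card_univ, Fintype.card_fin,
    nsmul_eq_mul, mul_one, hsum] at h
  rw [div_self hKrpos.ne'] at h
  by_contra hgt
  push_neg at hgt
  have hpos : 0 < ∏ k, s k := lt_trans one_pos hgt
  have := Real.one_lt_rpow_iff_of_pos hpos (y := ((K:ℝ))⁻¹)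
  have h2 : 1 < (∏ k, s k) ^ ((K:ℝ))⁻¹ := this.2 (Or.inl ⟨hgt, by positivity⟩)
  linarith

lemma aux_cancel {F K N : ℕ} {Ws : Matrix (Fin F) (Fin K) ℝ}
    (hinj : Function.Injective Ws.mulVecLin)
    {X Y : Matrix (Fin K) (Fin N) ℝ} (h : Ws * X = Ws * Y) : X = Y := by
  ext i j
  have h1 : ∀ v, X.mulVec v = Y.mulVec v := by
    intro v
    apply hinj
    show Ws.mulVec (X.mulVec v) = Ws.mulVec (Y.mulVec v)
    rw [mulVec_mulVec, mulVec_mulVec, h]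
  have h2 := congrFun (h1 (Pi.single j 1)) i
  simpa [mulVec_single] using h2

lemma aux_inj {F K : ℕ} {Ws : Matrix (Fin F) (Fin K) ℝ} (hr : Ws.rank = K) :
    Function.Injective Ws.mulVecLin := by
  rw [← LinearMap.ker_eq_bot]
  rw [← Submodule.finrank_eq_zero (R := ℝ)]
  have h1 := LinearMap.finrank_range_add_finrank_ker Ws.mulVecLin
  have h2 : Module.finrank ℝ (LinearMap.range Ws.mulVecLin) = K := hr
  have h3 : Module.finrank ℝ (Fin K → ℝ) = K := by
    simp [Module.finrank_pi]
  omega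


/-- Identifiability of minimum-volume NMF with normalization `Wᵀe = e`:
if `V = W# H#` with `rank(V) = K`, `W# ≥ 0` with unit column sums, `H# ≥ 0`
sufficiently scattered, then any optimal solution `(Ŵ, Ĥ)` of
`min logdet(ŴᵀŴ) s.t. V = ŴĤ, Ŵᵀe = e, Ĥ ≥ 0` equals `(W#Π, ΠᵀH#)`
for some permutation matrix `Π` (expressed as a permutation `σ` of the columns). -/
theorem minvol_NMF_identifiability {F K N : ℕ}
    (Ws : Matrix (Fin F) (Fin K) ℝ) (Hs : Matrix (Fin K) (Fin N) ℝ)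
    (V : Matrix (Fin F) (Fin N) ℝ)
    (hV : V = Ws * Hs)
    (hrank : V.rank = K)
    (hWs_nonneg : ∀ f k, 0 ≤ Ws f k)
    (hWs_col : ∀ k, ∑ f, Ws f k = 1)
    (hHs_nonneg : ∀ k n, 0 ≤ Hs k n)
    (hHs_ss : SufficientlyScattered Hs)
    (What : Matrix (Fin F) (Fin K) ℝ) (Hhat : Matrix (Fin K) (Fin N) ℝ)
    (hfeas_eq : V = What * Hhat)
    (hfeas_col : ∀ k, ∑ f, What f k = 1)
    (hfeas_H : ∀ k n, 0 ≤ Hhat k n)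
    (hopt : ∀ (W : Matrix (Fin F) (Fin K) ℝ) (H : Matrix (Fin K) (Fin N) ℝ),
      V = W * H → (∀ k, ∑ f, W f k = 1) → (∀ k n, 0 ≤ H k n) →
      Real.log (Whatᵀ * What).det ≤ Real.log (Wᵀ * W).det) :
    ∃ σ : Equiv.Perm (Fin K),
      (∀ f k, What f k = Ws f (σ k)) ∧ (∀ k n, Hhat k n = Hs (σ k) n) := by
  classical
  rcases Nat.eq_zero_or_pos K with hK0 | hKpos
  · subst hK0
    exact ⟨Equiv.refl _, fun f k => k.elim0, fun k n => k.elim0⟩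
  -- ranks
  have hrankWs : Ws.rank = K := by
    refine le_antisymm (Ws.rank_le_width) ?_
    calc K = V.rank := hrank.symm
      _ ≤ Ws.rank := by rw [hV]; exact rank_mul_le_left Ws Hs
  have hrankWhat : What.rank = K := by
    refine le_antisymm (What.rank_le_width) ?_
    calc K = V.rank := hrank.symm
      _ ≤ What.rank := by rw [hfeas_eq]; exact rank_mul_le_left What Hhat
  have hWsinj : Function.Injective Ws.mulVecLin := aux_inj hrankWs
  have hWhatinj : Function.Injective What.mulVecLin := aux_inj hrankWhat
  -- range equalities
  have hrangeV_Ws : LinearMap.range V.mulVecLin = LinearMap.range Ws.mulVecLin := by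
    apply Submodule.eq_of_le_of_finrank_le
    · rw [hV, mulVecLin_mul]; exact LinearMap.range_comp_le_range _ _
    · show Ws.rank ≤ V.rank
      rw [hrankWs, hrank]
  have hrangeV_What : LinearMap.range V.mulVecLin = LinearMap.range What.mulVecLin := by
    apply Submodule.eq_of_le_of_finrank_le
    · rw [hfeas_eq, mulVecLin_mul]; exact LinearMap.range_comp_le_range _ _
    · show What.rank ≤ V.rank
      rw [hrankWhat, hrank]
  have hrangeEq : LinearMap.range What.mulVecLin = LinearMap.range Ws.mulVecLin := by
    rw [← hrangeV_What, hrangeV_Ws]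
  -- construct A with Ws * A = What
  have hcolA' : ∀ k : Fin K, ∃ c : Fin K → ℝ, Ws.mulVec c = What.mulVec (Pi.single k 1) := by
    intro k
    have hmem : What.mulVec (Pi.single k 1) ∈ LinearMap.range What.mulVecLin :=
      ⟨Pi.single k 1, rfl⟩
    rw [hrangeEq] at hmem
    exact hmem
  choose cA hcA using hcolA'
  set A : Matrix (Fin K) (Fin K) ℝ := Matrix.of (fun j k => cA k j) with hA_def
  have hWA : Ws * A = What := by
    ext f k
    have h1 := congrFun (hcA k) f
    simp only [mulVec_single, mul_one] at h1
    simpa [Matrix.mul_apply, Matrix.mulVec, dotProduct, hA_def] using h1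
  -- construct B with What * B = Ws
  have hcolB' : ∀ k : Fin K, ∃ c : Fin K → ℝ, What.mulVec c = Ws.mulVec (Pi.single k 1) := by
    intro k
    have hmem : Ws.mulVec (Pi.single k 1) ∈ LinearMap.range Ws.mulVecLin :=
      ⟨Pi.single k 1, rfl⟩
    rw [← hrangeEq] at hmem
    exact hmem
  choose cB hcB using hcolB'
  set B : Matrix (Fin K) (Fin K) ℝ := Matrix.of (fun j k => cB k j) with hB_def
  have hWB : What * B = Ws := by
    ext f k
    have h1 := congrFun (hcB k) f
    simp only [mulVec_single, mul_one] at h1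
    simpa [Matrix.mul_apply, Matrix.mulVec, dotProduct, hB_def] using h1
  have hAB : A * B = 1 := by
    apply aux_cancel hWsinj
    rw [← Matrix.mul_assoc, hWA, hWB, Matrix.mul_one]
  have hBA : B * A = 1 := mul_eq_one_comm.mp hAB
  have hHsA : Hs = A * Hhat := by
    apply aux_cancel hWsinj
    rw [← Matrix.mul_assoc, hWA, ← hfeas_eq, hV]
  have hHhatB : Hhat = B * Hs := by
    rw [hHsA, ← Matrix.mul_assoc, hBA, Matrix.one_mul]
  -- column sums of A
  have hcolA : ∀ k, ∑ j, A j k = 1 := by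
    intro k
    have h1 := hfeas_col k
    rw [← hWA] at h1
    calc ∑ j, A j k = ∑ j, (∑ f, Ws f j) * A j k := by
          refine Finset.sum_congr rfl fun j _ => ?_
          rw [hWs_col j, one_mul]
      _ = ∑ j, ∑ f, Ws f j * A j k := by
          refine Finset.sum_congr rfl fun j _ => ?_
          rw [Finset.sum_mul]
      _ = ∑ f, ∑ j, Ws f j * A j k := Finset.sum_comm
      _ = ∑ f, (Ws * A) f k := by
          refine Finset.sum_congr rfl fun f _ => ?_
          rw [Matrix.mul_apply]
      _ = 1 := h1
  -- column sums of B
  have hcolB : ∀ k, ∑ j, B j k = 1 := by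
    intro k
    calc ∑ j, B j k = ∑ j, (∑ i, A i j) * B j k := by
          refine Finset.sum_congr rfl fun j _ => ?_
          rw [hcolA j, one_mul]
      _ = ∑ j, ∑ i, A i j * B j k := by
          refine Finset.sum_congr rfl fun j _ => ?_
          rw [Finset.sum_mul]
      _ = ∑ i, ∑ j, A i j * B j k := Finset.sum_comm
      _ = ∑ i, (A * B) i k := by
          refine Finset.sum_congr rfl fun i _ => ?_
          rw [Matrix.mul_apply]
      _ = 1 := by rw [hAB]; simp [Matrix.one_apply]
  -- rows of B are in the dual cone
  have hdual : ∀ k, (B k) ∈ dualCone (coneH Hs) := by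
    intro k x hx
    obtain ⟨θ, hθ, rfl⟩ := hx
    have heq : ∑ i, Hs.mulVec θ i * B k i = ∑ n, Hhat k n * θ n := by
      calc ∑ i, Hs.mulVec θ i * B k i = ∑ i, ∑ n, Hs i n * θ n * B k i := by
            refine Finset.sum_congr rfl fun i _ => ?_
            rw [Matrix.mulVec, dotProduct, Finset.sum_mul]
        _ = ∑ n, ∑ i, Hs i n * θ n * B k i := Finset.sum_comm
        _ = ∑ n, (∑ i, B k i * Hs i n) * θ n := by
            refine Finset.sum_congr rfl fun n _ => ?_
            rw [Finset.sum_mul]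
            refine Finset.sum_congr rfl fun i _ => by ring
        _ = ∑ n, Hhat k n * θ n := by
            refine Finset.sum_congr rfl fun n _ => ?_
            rw [hHhatB, Matrix.mul_apply]
    rw [heq]
    exact Finset.sum_nonneg fun n _ => mul_nonneg (hfeas_H k n) (hθ n)
  -- key claim: B is a permutation matrix
  have hperm : ∃ π : Equiv.Perm (Fin K), ∀ k i, B k i = if i = π k then 1 else 0 := by
    rcases lt_or_ge K 2 with hK1 | hK2
    · -- K = 1
      have hK1' : K = 1 := by omega
      subst hK1'
      refine ⟨Equiv.refl _, fun k i => ?_⟩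
      have hk : k = 0 := Subsingleton.elim _ _
      have hi : i = 0 := Subsingleton.elim _ _
      subst hk; subst hi
      have h6 := hcolB 0
      rw [Fin.sum_univ_one] at h6
      simp [h6]
    · -- main case K ≥ 2
      have hsum_s : ∑ k, (∑ i, B k i) = K := by
        rw [show ∑ k, ∑ i, B k i = ∑ i, ∑ k, B k i from Finset.sum_comm]
        rw [Finset.sum_congr rfl fun i _ => hcolB i]
        simp
      have hns : ∀ k, Real.sqrt (∑ i, (B k i)^2) ≤ ∑ i, B k i := fun k =>
        aux_soc_dual hK2 (B k) (fun x hx => hdual k x (hHs_ss.1 hx))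
      -- determinant bounds
      have hdetAB : A.det * B.det = 1 := by rw [← det_mul, hAB, det_one]
      have hWtW : Whatᵀ * What = Aᵀ * (Wsᵀ * Ws) * A := by
        rw [← hWA, transpose_mul, Matrix.mul_assoc, ← Matrix.mul_assoc Wsᵀ, ← Matrix.mul_assoc]
      have hdetWtW : (Whatᵀ * What).det = A.det ^ 2 * (Wsᵀ * Ws).det := by
        rw [hWtW, det_mul, det_mul, det_transpose]; ring
      have hpd : (Wsᵀ * Ws).PosDef := by
        refine Matrix.PosDef.of_dotProduct_mulVec_pos ?_ ?_
        · show (Wsᵀ * Ws)ᴴ = Wsᵀ * Ws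
          ext i j
          simp only [conjTranspose_apply, Matrix.mul_apply, transpose_apply, star_trivial]
          exact Finset.sum_congr rfl fun f _ => mul_comm _ _
        · intro x hx
          have hx' : Ws.mulVec x ≠ 0 := by
            intro h0
            apply hx
            apply hWsinj
            show Ws.mulVec x = Ws.mulVec 0
            rw [h0, mulVec_zero]
          show 0 < star x ⬝ᵥ (Wsᵀ * Ws) *ᵥ x
          rw [star_trivial, ← mulVec_mulVec, dotProduct_mulVec, vecMul_transpose]
          obtain ⟨f0, hf0⟩ := Function.ne_iff.mp hx'
          refine Finset.sum_pos' (fun f _ => mul_self_nonneg _) ⟨f0, Finset.mem_univ f0, ?_⟩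
          exact mul_self_pos.mpr hf0
      have hd : 0 < (Wsᵀ * Ws).det := hpd.det_pos
      have hAd : A.det ≠ 0 := fun h => by simp [h] at hdetAB
      have hA2pos : 0 < A.det ^ 2 := lt_of_le_of_ne (sq_nonneg _) (Ne.symm (pow_ne_zero 2 hAd))
      have hdetWtWpos : 0 < (Whatᵀ * What).det := by
        rw [hdetWtW]; exact mul_pos hA2pos hd
      have hlog := hopt Ws Hs hV hWs_col hHs_nonneg
      have hle : (Whatᵀ * What).det ≤ (Wsᵀ * Ws).det :=
        (Real.log_le_log_iff hdetWtWpos hd).mp hlog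
      have hA2 : A.det ^ 2 ≤ 1 := by
        rw [hdetWtW] at hle; nlinarith
      have hB2 : 1 ≤ B.det ^ 2 := by nlinarith [sq_nonneg B.det, sq_nonneg A.det]
      have hB1 : 1 ≤ |B.det| := by nlinarith [sq_abs B.det, abs_nonneg B.det]
      -- the chain of inequalities
      have hHad := aux_hadamard B
      have h3 : ∏ k, Real.sqrt (∑ i, (B k i)^2) ≤ ∏ k, (∑ i, B k i) :=
        Finset.prod_le_prod (fun k _ => Real.sqrt_nonneg _) (fun k _ => hns k)
      have h4 : ∏ k, (∑ i, B k i) ≤ 1 :=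
        aux_amgm hKpos _ (fun k => (Real.sqrt_nonneg _).trans (hns k)) hsum_s
      have hPn1 : ∏ k, Real.sqrt (∑ i, (B k i)^2) = 1 :=
        le_antisymm (h3.trans h4) (hB1.trans hHad)
      have hPs1 : ∏ k, (∑ i, B k i) = 1 := le_antisymm h4 (hPn1 ▸ h3)
      have hnvpos : ∀ k, 0 < Real.sqrt (∑ i, (B k i)^2) := by
        intro k
        rcases eq_or_lt_of_le (Real.sqrt_nonneg (∑ i, (B k i)^2)) with h0 | h0
        · exfalso
          have := Finset.prod_eq_zero (f := fun k => Real.sqrt (∑ i, (B k i)^2))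
            (Finset.mem_univ k) h0.symm
          rw [hPn1] at this
          norm_num at this
        · exact h0
      have heqk : ∀ k, Real.sqrt (∑ i, (B k i)^2) = ∑ i, B k i := by
        by_contra hc
        push_neg at hc
        obtain ⟨k0, hk0⟩ := hc
        have hlt := Finset.prod_lt_prod (f := fun k => Real.sqrt (∑ i, (B k i)^2))
          (g := fun k => ∑ i, B k i) (fun k _ => hnvpos k) (fun k _ => hns k)
          ⟨k0, Finset.mem_univ k0, lt_of_le_of_ne (hns k0) hk0⟩
        rw [hPn1, hPs1] at hlt
        exact lt_irrefl _ hlt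
      -- each row of B is on the frontier, hence a scaled basis vector
      have hex : ∀ k, ∃ (j : Fin K) (lam : ℝ), 0 ≤ lam ∧
          B k = fun i => lam * (if i = j then (1:ℝ) else 0) := by
        intro k
        exact (Set.ext_iff.mp hHs_ss.2 (B k)).mp ⟨hdual k, aux_frontier hK2 (B k) (heqk k)⟩
      choose jm lam hlam0 hBk using hex
      have hBki : ∀ k i, B k i = lam k * (if i = jm k then 1 else 0) :=
        fun k i => congrFun (hBk k) i
      have hrow_lam : ∀ k, ∑ i, B k i = lam k := by
        intro k
        rw [Finset.sum_congr rfl fun i _ => hBki k i]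
        simp [mul_ite, Finset.sum_ite_eq']
      have hsurj : Function.Surjective jm := by
        intro i
        by_contra hc
        push_neg at hc
        have h6 := hcolB i
        have h7 : ∀ k, B k i = 0 := by
          intro k
          rw [hBki k i, if_neg (fun h => hc k h.symm), mul_zero]
        rw [Finset.sum_congr rfl fun k _ => h7 k, Finset.sum_const_zero] at h6
        exact zero_ne_one h6
      have hinjj : Function.Injective jm := Finite.injective_iff_surjective.mpr hsurj
      have hlam1 : ∀ k, lam k = 1 := by
        intro k
        have h8 := hcolB (jm k)
        have h9 : ∑ k', B k' (jm k) = lam k := by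
          rw [Finset.sum_congr rfl fun k' _ => hBki k' (jm k)]
          have h10 : ∀ k' : Fin K, (if jm k = jm k' then (1:ℝ) else 0)
              = if k' = k then 1 else 0 := by
            intro k'
            by_cases h : k' = k
            · subst h; simp
            · rw [if_neg (fun hh => h (hinjj hh.symm)), if_neg h]
          rw [Finset.sum_congr rfl fun k' _ => by rw [h10 k']]
          simp [mul_ite, Finset.sum_ite_eq']
        rw [h9] at h8
        exact h8
      refine ⟨Equiv.ofBijective jm ⟨hinjj, hsurj⟩, fun k i => ?_⟩
      rw [hBki k i, hlam1 k, one_mul]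
      rfl
  obtain ⟨π, hBperm⟩ := hperm
  refine ⟨π, ?_, ?_⟩
  · intro f k
    have h1 : Ws f (π k) = What f k := by
      rw [← hWB, Matrix.mul_apply]
      rw [Finset.sum_congr rfl fun k' _ => by rw [hBperm k' (π k)]]
      have h10 : ∀ k' : Fin K, (if π k = π k' then (1:ℝ) else 0) = if k' = k then 1 else 0 := by
        intro k'
        by_cases h : k' = k
        · subst h; simp
        · rw [if_neg (fun hh => h (π.injective hh.symm)), if_neg h]
      rw [Finset.sum_congr rfl fun k' _ => by rw [h10 k']]
      simp [mul_ite, Finset.sum_ite_eq']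
    exact h1.symm
  · intro k n
    rw [hHhatB, Matrix.mul_apply]
    rw [Finset.sum_congr rfl fun i _ => by rw [hBperm k i]]
    simp [ite_mul, Finset.sum_ite_eq']
end

section
/- Let Y ∈ ℝ^{K×K} be symmetric, write Y = Y⁺ − Y⁻ with Y⁺ = max(Y, 0) and Y⁻ = max(−Y, 0) taken entrywise, let w̃ ∈ ℝ^K have strictly positive entries, and let Φ(w̃) be the diagonal matrix with diagonal entries Φ(w̃)_{kk} = 2·((Y⁺w̃)_k + (Y⁻w̃)_k)/w̃_k. Define l(w) = wᵀYw and l̄(w | w̃) = l(w̃) + (w − w̃)ᵀ∇l(w̃) + ½(w − w̃)ᵀΦ(w̃)(w − w̃), where ∇l(w̃) = 2Yw̃. Then l̄ is a separable auxiliary function for l at w̃: l̄(w | w̃) ≥ l(w) for all w ∈ ℝ^K_+ and l̄(w̃ | w̃) = l(w̃). -/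
open Matrix

/-- Pointwise nonnegativity after symmetrization. -/
lemma aux_ptwise (a b wi wj di dj : ℝ) (ha : 0 ≤ a) (hb : 0 ≤ b)
    (hwi : 0 < wi) (hwj : 0 < wj) :
    0 ≤ (a + b) * (di ^ 2 * wj / wi + dj ^ 2 * wi / wj) - 2 * (a - b) * (di * dj) := by
  have e : (a + b) * (di ^ 2 * wj / wi + dj ^ 2 * wi / wj) - 2 * (a - b) * (di * dj)
      = (a * (wj * di - wi * dj) ^ 2 + b * (wj * di + wi * dj) ^ 2) / (wi * wj) := by
    field_simp
    ring
  rw [e]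
  apply div_nonneg _ (mul_pos hwi hwj).le
  have := mul_nonneg ha (sq_nonneg (wj * di - wi * dj))
  have := mul_nonneg hb (sq_nonneg (wj * di + wi * dj))
  linarith

/-- Separable auxiliary function for the quadratic form `l(w) = wᵀYw` at `w̃ > 0`:
with `Y = Y⁺ − Y⁻` (entrywise positive/negative parts), `Φ(w̃)` the diagonal matrix
with entries `2((Y⁺w̃)_k + (Y⁻w̃)_k)/w̃_k`, and
`l̄(w|w̃) = l(w̃) + (w−w̃)ᵀ∇l(w̃) + ½(w−w̃)ᵀΦ(w̃)(w−w̃)` where `∇l(w̃) = 2Yw̃`,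
we have `l̄(w|w̃) ≥ l(w)` for all `w ∈ ℝ₊^K` and `l̄(w̃|w̃) = l(w̃)`. -/
theorem quadratic_separable_auxiliary {K : ℕ}
    (Y Yp Ym : Matrix (Fin K) (Fin K) ℝ) (hY : Y.IsSymm)
    (hYp : ∀ i j, Yp i j = max (Y i j) 0)
    (hYm : ∀ i j, Ym i j = max (-(Y i j)) 0)
    (wt : Fin K → ℝ) (hwt : ∀ k, 0 < wt k)
    (Φ : Matrix (Fin K) (Fin K) ℝ)
    (hΦ : Φ = Matrix.diagonal fun k => 2 * ((Yp.mulVec wt k + Ym.mulVec wt k) / wt k))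
    (l lbar : (Fin K → ℝ) → ℝ)
    (hl : ∀ w, l w = ∑ i, ∑ j, w i * Y i j * w j)
    (hlbar : ∀ w, lbar w =
      l wt + (∑ k, (w k - wt k) * (2 * Y.mulVec wt k))
        + (1 / 2) * ∑ i, ∑ j, (w i - wt i) * Φ i j * (w j - wt j)) :
    (∀ w : Fin K → ℝ, (∀ k, 0 ≤ w k) → l w ≤ lbar w) ∧ lbar wt = l wt := by
  have hYsym : ∀ i j, Y j i = Y i j := fun i j => hY.apply i j
  have hYpsym : ∀ i j, Yp j i = Yp i j := fun i j => by rw [hYp, hYp, hYsym]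
  have hYmsym : ∀ i j, Ym j i = Ym i j := fun i j => by rw [hYm, hYm, hYsym]
  have hYpnn : ∀ i j, 0 ≤ Yp i j := fun i j => by rw [hYp]; exact le_max_right _ _
  have hYmnn : ∀ i j, 0 ≤ Ym i j := fun i j => by rw [hYm]; exact le_max_right _ _
  have hdec : ∀ i j, Y i j = Yp i j - Ym i j := by
    intro i j
    rw [hYp, hYm]
    rcases le_total 0 (Y i j) with h | h
    · rw [max_eq_left h, max_eq_right (by linarith)]; ring
    · rw [max_eq_right h, max_eq_left (by linarith)]; ring
  constructor
  · intro w _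
    set d : Fin K → ℝ := fun k => w k - wt k with hd
    set F : Fin K → Fin K → ℝ := fun i j =>
      wt i * Y i j * wt j + d i * (2 * (Y i j * wt j))
        + d i ^ 2 * ((Yp i j + Ym i j) * wt j) / wt i - w i * Y i j * w j with hF
    have hexp : lbar w - l w = ∑ i, ∑ j, F i j := by
      rw [hlbar, hl w, hl wt]
      have h1 : (∑ k, (w k - wt k) * (2 * Y.mulVec wt k))
          = ∑ i, ∑ j, d i * (2 * (Y i j * wt j)) := by
        apply Finset.sum_congr rfl
        intro i _
        simp only [Matrix.mulVec, dotProduct, Finset.mul_sum, hd]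
      have h2 : (1 / 2 : ℝ) * ∑ i, ∑ j, (w i - wt i) * Φ i j * (w j - wt j)
          = ∑ i, ∑ j, d i ^ 2 * ((Yp i j + Ym i j) * wt j) / wt i := by
        rw [hΦ, Finset.mul_sum]
        apply Finset.sum_congr rfl
        intro i _
        have hdiag : ∑ j, (w i - wt i) *
            (Matrix.diagonal fun k => 2 * ((Yp.mulVec wt k + Ym.mulVec wt k) / wt k)) i j
              * (w j - wt j)
            = (w i - wt i) * (2 * ((Yp.mulVec wt i + Ym.mulVec wt i) / wt i)) * (w i - wt i) := by
          rw [Finset.sum_eq_single i]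
          · simp [Matrix.diagonal_apply_eq]
          · intro j _ hj
            simp [Matrix.diagonal_apply_ne' _ hj]
          · simp
        rw [hdiag]
        simp only [Matrix.mulVec, dotProduct, hd]
        rw [← Finset.sum_add_distrib, Finset.sum_div, Finset.mul_sum, Finset.mul_sum,
          Finset.sum_mul, Finset.mul_sum]
        apply Finset.sum_congr rfl
        intro j _
        have := (hwt i).ne'
        field_simp
      rw [h1, h2]
      simp only [hF]
      rw [← Finset.sum_add_distrib, ← Finset.sum_add_distrib, ← Finset.sum_sub_distrib]
      apply Finset.sum_congr rfl
      intro i _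
      rw [← Finset.sum_add_distrib, ← Finset.sum_add_distrib, ← Finset.sum_sub_distrib]
    have hkey : ∀ i j, 0 ≤ F i j + F j i := by
      intro i j
      have e : F i j + F j i
          = (Yp i j + Ym i j) * (d i ^ 2 * wt j / wt i + d j ^ 2 * wt i / wt j)
            - 2 * (Yp i j - Ym i j) * (d i * d j) := by
        simp only [hF]
        rw [hYsym i j, hYpsym i j, hYmsym i j, hdec i j]
        have hi := (hwt i).ne'
        have hj := (hwt j).ne'
        have hwi : w i = wt i + d i := by simp [hd]
        have hwj : w j = wt j + d j := by simp [hd]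
        rw [hwi, hwj]
        field_simp
        ring
      rw [e]
      exact aux_ptwise _ _ _ _ _ _ (hYpnn i j) (hYmnn i j) (hwt i) (hwt j)
    have hSS : 0 ≤ (∑ i, ∑ j, F i j) + ∑ i, ∑ j, F i j := by
      have hc : (∑ i, ∑ j, F i j) = ∑ i, ∑ j, F j i := Finset.sum_comm
      calc (0 : ℝ) ≤ ∑ i, ∑ j, (F i j + F j i) :=
            Finset.sum_nonneg fun i _ => Finset.sum_nonneg fun j _ => hkey i j
        _ = (∑ i, ∑ j, F i j) + ∑ i, ∑ j, F j i := by
            rw [← Finset.sum_add_distrib]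
            exact Finset.sum_congr rfl fun i _ => Finset.sum_add_distrib
        _ = (∑ i, ∑ j, F i j) + ∑ i, ∑ j, F i j := by rw [← hc]
    have h0 : (0:ℝ) ≤ ∑ i, ∑ j, F i j := by linarith
    linarith [hexp, h0]
  · rw [hlbar]
    simp
end

section
/- Let Y ∈ ℝ^{K×K} be symmetric, write Y = Y⁺ − Y⁻ with Y⁺ = max(Y, 0) and Y⁻ = max(−Y, 0) taken entrywise, let w̃ ∈ ℝ^K have strictly positive entries, and let Φ(w̃) be the diagonal matrix with diagonal entries Φ(w̃)_{kk} = 2·((Y⁺w̃)_k + (Y⁻w̃)_k)/w̃_k. Then the matrix Φ(w̃) − 2Y is positive semidefinite. Equivalently, the symmetric matrix M with entries M_{ij} = w̃_i·(Φ(w̃) − 2Y)_{ij}·w̃_j has nonnegative diagonal entries and is diagonally dominant (|M_{ii}| ≥ Σ_{j≠i}|M_{ij}| for all i), hence positive semidefinite. -/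
open Matrix Finset

/-- A real symmetric diagonally dominant matrix with nonnegative diagonal is PSD. -/
lemma posSemidef_of_dd {n : ℕ} (A : Matrix (Fin n) (Fin n) ℝ) (hsymm : A.IsSymm)
    (hdd : ∀ i, ∑ j ∈ Finset.univ.erase i, |A i j| ≤ A i i) : A.PosSemidef := by
  rw [Matrix.posSemidef_iff_dotProduct_mulVec]
  constructor
  · rw [Matrix.IsHermitian]
    ext i j
    simp [Matrix.conjTranspose_apply, ← hsymm.apply i j, Matrix.transpose_apply]
  · intro x
    have hx : star x = x := by simp
    rw [hx]
    have expand : x ⬝ᵥ A *ᵥ x = ∑ i, ∑ j, x i * A i j * x j := by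
      simp [dotProduct, Matrix.mulVec, Finset.mul_sum, mul_assoc]
    rw [expand]
    -- split each inner sum at j = i
    have split : ∀ i : Fin n, ∑ j, x i * A i j * x j
        = A i i * x i ^ 2 + ∑ j ∈ Finset.univ.erase i, x i * A i j * x j := by
      intro i
      rw [← Finset.add_sum_erase _ _ (Finset.mem_univ i)]
      ring_nf
    simp only [split]
    rw [Finset.sum_add_distrib]
    -- lower bound the off-diagonal part
    have hbound : ∀ i : Fin n, -(∑ j ∈ Finset.univ.erase i,
        |A i j| * ((x i ^ 2 + x j ^ 2) / 2)) ≤ ∑ j ∈ Finset.univ.erase i, x i * A i j * x j := by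
      intro i
      rw [← Finset.sum_neg_distrib]
      apply Finset.sum_le_sum
      intro j _
      have h1 : |x i * A i j * x j| ≤ |A i j| * ((x i ^ 2 + x j ^ 2) / 2) := by
        rw [abs_mul, abs_mul]
        have h2 : |x i| * |x j| ≤ (x i ^ 2 + x j ^ 2) / 2 := by
          nlinarith [sq_nonneg (|x i| - |x j|), sq_abs (x i), sq_abs (x j)]
        calc |x i| * |A i j| * |x j| = |A i j| * (|x i| * |x j|) := by ring
          _ ≤ |A i j| * ((x i ^ 2 + x j ^ 2) / 2) := by
              exact mul_le_mul_of_nonneg_left h2 (abs_nonneg _)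
      linarith [(abs_le.mp h1).1]
    have habs : ∀ i j, |A i j| = |A j i| := by
      intro i j
      rw [hsymm.apply i j]
    -- sum of the bounds
    have hswap : ∑ i, ∑ j ∈ Finset.univ.erase i, |A i j| * x j ^ 2
        = ∑ i, ∑ j ∈ Finset.univ.erase i, |A i j| * x i ^ 2 := by
      rw [Finset.sum_comm' (t' := Finset.univ) (s' := fun j => Finset.univ.erase j)
        (by intro i j; simp [eq_comm])]
      apply Finset.sum_congr rfl
      intro j _
      apply Finset.sum_congr rfl
      intro i _
      rw [habs]
    have hkey : ∑ i, ∑ j ∈ Finset.univ.erase i, |A i j| * ((x i ^ 2 + x j ^ 2) / 2)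
        = ∑ i, (∑ j ∈ Finset.univ.erase i, |A i j|) * x i ^ 2 := by
      have e1 : ∀ i : Fin n, ∑ j ∈ Finset.univ.erase i, |A i j| * ((x i ^ 2 + x j ^ 2) / 2)
          = (∑ j ∈ Finset.univ.erase i, |A i j| * x i ^ 2) / 2
            + (∑ j ∈ Finset.univ.erase i, |A i j| * x j ^ 2) / 2 := by
        intro i
        rw [Finset.sum_div, Finset.sum_div, ← Finset.sum_add_distrib]
        apply Finset.sum_congr rfl
        intro j _
        ring
      calc ∑ i, ∑ j ∈ Finset.univ.erase i, |A i j| * ((x i ^ 2 + x j ^ 2) / 2)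
          = ∑ i, ((∑ j ∈ Finset.univ.erase i, |A i j| * x i ^ 2) / 2
            + (∑ j ∈ Finset.univ.erase i, |A i j| * x j ^ 2) / 2) :=
            Finset.sum_congr rfl fun i _ => e1 i
        _ = (∑ i, ∑ j ∈ Finset.univ.erase i, |A i j| * x i ^ 2) / 2
            + (∑ i, ∑ j ∈ Finset.univ.erase i, |A i j| * x j ^ 2) / 2 := by
            rw [Finset.sum_add_distrib, ← Finset.sum_div, ← Finset.sum_div]
        _ = (∑ i, ∑ j ∈ Finset.univ.erase i, |A i j| * x i ^ 2) / 2
            + (∑ i, ∑ j ∈ Finset.univ.erase i, |A i j| * x i ^ 2) / 2 := by rw [hswap]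
        _ = ∑ i, ∑ j ∈ Finset.univ.erase i, |A i j| * x i ^ 2 := add_halves _
        _ = ∑ i, (∑ j ∈ Finset.univ.erase i, |A i j|) * x i ^ 2 :=
            Finset.sum_congr rfl fun i _ => (Finset.sum_mul _ _ _).symm
    have hfinal : ∑ i, (∑ j ∈ Finset.univ.erase i, |A i j|) * x i ^ 2
        ≤ ∑ i, A i i * x i ^ 2 := by
      apply Finset.sum_le_sum
      intro i _
      exact mul_le_mul_of_nonneg_right (hdd i) (sq_nonneg _)
    have h2 : -(∑ i, (∑ j ∈ Finset.univ.erase i, |A i j|) * x i ^ 2)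
        ≤ ∑ i, ∑ j ∈ Finset.univ.erase i, x i * A i j * x j := by
      rw [← hkey]
      calc -(∑ i, ∑ j ∈ Finset.univ.erase i, |A i j| * ((x i ^ 2 + x j ^ 2) / 2))
          = ∑ i, -(∑ j ∈ Finset.univ.erase i, |A i j| * ((x i ^ 2 + x j ^ 2) / 2)) := by
            rw [Finset.sum_neg_distrib]
        _ ≤ _ := Finset.sum_le_sum fun i _ => hbound i
    linarith

/-- With `Y` symmetric, `Y = Y⁺ − Y⁻` its entrywise positive/negative parts,
`w̃ > 0`, and `Φ(w̃)` the diagonal matrix with entries `2((Y⁺w̃)_k + (Y⁻w̃)_k)/w̃_k`,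
the matrix `Φ(w̃) − 2Y` is positive semidefinite. Equivalently, the rescaled matrix
`M_{ij} = w̃_i (Φ(w̃) − 2Y)_{ij} w̃_j` has nonnegative diagonal entries and is
diagonally dominant, hence positive semidefinite. -/
theorem Phi_minus_2Y_posSemidef {K : ℕ}
    (Y Yp Ym : Matrix (Fin K) (Fin K) ℝ) (hY : Y.IsSymm)
    (hYp : ∀ i j, Yp i j = max (Y i j) 0)
    (hYm : ∀ i j, Ym i j = max (-(Y i j)) 0)
    (wt : Fin K → ℝ) (hwt : ∀ k, 0 < wt k)
    (Φ : Matrix (Fin K) (Fin K) ℝ)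
    (hΦ : Φ = Matrix.diagonal fun k => 2 * ((Yp.mulVec wt k + Ym.mulVec wt k) / wt k))
    (M : Matrix (Fin K) (Fin K) ℝ)
    (hM : ∀ i j, M i j = wt i * (Φ - (2 : ℝ) • Y) i j * wt j) :
    (Φ - (2 : ℝ) • Y).PosSemidef ∧
    (∀ i, 0 ≤ M i i) ∧
    (∀ i, ∑ j ∈ Finset.univ.erase i, |M i j| ≤ |M i i|) ∧
    M.PosSemidef := by
  have hYsymm : ∀ i j, Y j i = Y i j := fun i j => hY.apply i j
  -- off-diagonal entries of M
  have hMoff : ∀ i j, i ≠ j → M i j = -2 * wt i * Y i j * wt j := by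
    intro i j hij
    rw [hM, hΦ]
    simp only [Matrix.sub_apply, Matrix.diagonal_apply_ne _ hij, Matrix.smul_apply,
      smul_eq_mul]
    ring
  -- diagonal entries of M
  have habs_sum : ∀ i, Yp.mulVec wt i + Ym.mulVec wt i = ∑ j, |Y i j| * wt j := by
    intro i
    simp only [Matrix.mulVec, dotProduct, ← Finset.sum_add_distrib]
    apply Finset.sum_congr rfl
    intro j _
    rw [hYp, hYm]
    rw [abs_eq_max_neg]
    rcases le_total (Y i j) 0 with h | h
    · rw [max_eq_right h, max_eq_left (by linarith), max_eq_right (by linarith)]; ring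
    · rw [max_eq_left h, max_eq_right (by linarith), max_eq_left (by linarith)]; ring
  have hMdiag : ∀ i, M i i = 2 * wt i * (∑ j, |Y i j| * wt j) - 2 * Y i i * wt i ^ 2 := by
    intro i
    rw [hM, hΦ]
    simp only [Matrix.sub_apply, Matrix.diagonal_apply_eq, Matrix.smul_apply, smul_eq_mul]
    rw [habs_sum]
    have hwi := (hwt i).ne'
    field_simp
  -- diagonal dominance
  have hdd : ∀ i, ∑ j ∈ Finset.univ.erase i, |M i j| ≤ M i i := by
    intro i
    have hsum : ∑ j ∈ Finset.univ.erase i, |M i j|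
        = ∑ j ∈ Finset.univ.erase i, 2 * wt i * (|Y i j| * wt j) := by
      apply Finset.sum_congr rfl
      intro j hj
      rw [hMoff i j (Finset.ne_of_mem_erase hj).symm]
      rw [abs_mul, abs_mul, abs_mul]
      rw [abs_of_pos (hwt i), abs_of_pos (hwt j)]
      norm_num
      ring
    rw [hsum, hMdiag]
    rw [← Finset.mul_sum]
    have herase : ∑ j ∈ Finset.univ.erase i, |Y i j| * wt j
        = (∑ j, |Y i j| * wt j) - |Y i i| * wt i := by
      rw [← Finset.add_sum_erase _ _ (Finset.mem_univ i)]; ring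
    rw [herase]
    have hYle : Y i i ≤ |Y i i| := le_abs_self _
    nlinarith [sq_nonneg (wt i), (hwt i)]
  have hMnn : ∀ i, 0 ≤ M i i := by
    intro i
    refine le_trans ?_ (hdd i)
    exact Finset.sum_nonneg fun j _ => abs_nonneg _
  have hMsymm : M.IsSymm := by
    rw [Matrix.IsSymm]
    ext i j
    rw [Matrix.transpose_apply, hM, hM]
    rw [hΦ]
    simp only [Matrix.sub_apply, Matrix.smul_apply, smul_eq_mul, Matrix.diagonal_apply]
    rcases eq_or_ne i j with rfl | hij
    · ring
    · simp only [if_neg hij, if_neg (Ne.symm hij)]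
      rw [hYsymm]
      ring
  have hMpsd : M.PosSemidef := posSemidef_of_dd M hMsymm hdd
  have hdd' : ∀ i, ∑ j ∈ Finset.univ.erase i, |M i j| ≤ |M i i| := by
    intro i
    rw [abs_of_nonneg (hMnn i)]
    exact hdd i
  refine ⟨?_, hMnn, hdd', hMpsd⟩
  -- Φ - 2Y = Dᴴ M D with D = diagonal wt⁻¹
  have hdiagH : (Matrix.diagonal fun k => (wt k)⁻¹)ᴴ
      = Matrix.diagonal fun k => (wt k)⁻¹ := by
    rw [Matrix.diagonal_conjTranspose]
    congr 1
  have hcong : Φ - (2 : ℝ) • Y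
      = (Matrix.diagonal fun k => (wt k)⁻¹)ᴴ * M * (Matrix.diagonal fun k => (wt k)⁻¹) := by
    rw [hdiagH]
    ext i j
    rw [Matrix.mul_diagonal, Matrix.diagonal_mul, hM]
    have hi := (hwt i).ne'
    have hj := (hwt j).ne'
    field_simp
  rw [hcong]
  exact hMpsd.conjTranspose_mul_mul_same _
end

section
/- (Kullback–Leibler majorization by Jensen's inequality.) Let v ∈ ℝ^N with v_n > 0 for all n, H ∈ ℝ_+^{K×N}, and let w̃ ∈ ℝ^K have strictly positive entries with ṽ = w̃H satisfying ṽ_n > 0 for all n. Define G(w | w̃) = Σ_n Σ_k (w̃_k h_{kn} / ṽ_n) · d_KL(v_n | ṽ_n w_k / w̃_k) for w ∈ ℝ^K with positive entries. Then G(w | w̃) ≥ Σ_n d_KL(v_n | (wH)_n) for all such w, with equality when w = w̃; that is, G is an auxiliary function at w̃ for the row-wise KL-divergence objective w ↦ Σ_n d_KL(v_n | (wH)_n). -/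
/-- The Kullback–Leibler divergence between positive scalars. -/
noncomputable def dKL (x y : ℝ) : ℝ := x * Real.log (x / y) - x + y

lemma KL_jensen_key {K : ℕ} (v : ℝ) (hv : 0 < v) (h : Fin K → ℝ) (hh : ∀ k, 0 ≤ h k)
    (wt : Fin K → ℝ) (hwt : ∀ k, 0 < wt k)
    (vt : ℝ) (hvt : vt = ∑ k, wt k * h k) (hvtpos : 0 < vt)
    (w : Fin K → ℝ) (hw : ∀ k, 0 < w k) :
    dKL v (∑ k, w k * h k) ≤ ∑ k, (wt k * h k / vt) * dKL v (vt * w k / wt k) := by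
  set l : Fin K → ℝ := fun k => wt k * h k / vt with hl
  set y : Fin K → ℝ := fun k => vt * w k / wt k with hy
  have hl0 : ∀ k, 0 ≤ l k := fun k => by
    have h1 := hh k; have h2 := (hwt k).le; simp only [hl]; positivity
  have hl1 : ∑ k, l k = 1 := by
    simp only [hl]
    rw [← Finset.sum_div, ← hvt, div_self hvtpos.ne']
  have hy0 : ∀ k, 0 < y k := fun k => by
    have h1 := hw k; have h2 := hwt k; simp only [hy]; positivity
  have hly : ∀ k, l k * y k = w k * h k := fun k => by
    simp only [hl, hy]
    have h1 := (hwt k).ne'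
    have h2 := hvtpos.ne'
    field_simp
  have hsum : ∑ k, l k * y k = ∑ k, w k * h k :=
    Finset.sum_congr rfl fun k _ => hly k
  have hspos : 0 < ∑ k, w k * h k := by
    rw [← hsum]
    obtain ⟨j, hj⟩ : ∃ j, (0:ℝ) < l j := by
      by_contra hcon; push_neg at hcon
      have : ∑ k, l k ≤ 0 := Finset.sum_nonpos fun k _ => hcon k
      linarith [hl1]
    exact Finset.sum_pos' (fun k _ => mul_nonneg (hl0 k) (hy0 k).le)
      ⟨j, Finset.mem_univ j, mul_pos hj (hy0 j)⟩
  have jensen : ∑ k, l k • Real.log (y k) ≤ Real.log (∑ k, l k • y k) :=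
    strictConcaveOn_log_Ioi.concaveOn.le_map_sum (fun k _ => hl0 k) hl1
      (fun k _ => hy0 k)
  simp only [smul_eq_mul] at jensen
  rw [hsum] at jensen
  have expand : ∀ k, l k * dKL v (y k)
      = l k * (v * Real.log v - v) - v * (l k * Real.log (y k)) + l k * y k := by
    intro k
    unfold dKL
    rw [Real.log_div hv.ne' (hy0 k).ne']
    ring
  calc dKL v (∑ k, w k * h k)
      = v * Real.log v - v * Real.log (∑ k, w k * h k) - v + ∑ k, w k * h k := by
        unfold dKL; rw [Real.log_div hv.ne' hspos.ne']; ring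
    _ ≤ v * Real.log v - v * (∑ k, l k * Real.log (y k)) - v + ∑ k, w k * h k := by
        nlinarith [mul_le_mul_of_nonneg_left jensen hv.le]
    _ = ∑ k, l k * dKL v (y k) := by
        simp only [expand]
        rw [Finset.sum_add_distrib, Finset.sum_sub_distrib, ← Finset.sum_mul, hl1,
          ← Finset.mul_sum, hsum]
        ring

/-- Jensen majorization of the row-wise KL objective: with `v > 0`, `H ≥ 0`,
`w̃ > 0` and `ṽ = w̃H > 0`, the function
`G(w|w̃) = Σ_n Σ_k (w̃_k h_{kn}/ṽ_n) d_KL(v_n | ṽ_n w_k/w̃_k)` satisfies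
`G(w|w̃) ≥ Σ_n d_KL(v_n | (wH)_n)` for all `w > 0`, with equality at `w = w̃`. -/
theorem KL_jensen_auxiliary {K N : ℕ}
    (v : Fin N → ℝ) (hv : ∀ n, 0 < v n)
    (H : Matrix (Fin K) (Fin N) ℝ) (hH : ∀ k n, 0 ≤ H k n)
    (wt : Fin K → ℝ) (hwt : ∀ k, 0 < wt k)
    (vt : Fin N → ℝ) (hvt : ∀ n, vt n = ∑ k, wt k * H k n)
    (hvtpos : ∀ n, 0 < vt n)
    (G : (Fin K → ℝ) → ℝ)
    (hG : ∀ w, G w = ∑ n, ∑ k, (wt k * H k n / vt n) * dKL (v n) (vt n * w k / wt k)) :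
    (∀ w : Fin K → ℝ, (∀ k, 0 < w k) →
      (∑ n, dKL (v n) (∑ k, w k * H k n)) ≤ G w) ∧
    G wt = ∑ n, dKL (v n) (∑ k, wt k * H k n) := by
  constructor
  · intro w hw
    rw [hG w]
    exact Finset.sum_le_sum fun n _ =>
      KL_jensen_key (v n) (hv n) (fun k => H k n) (fun k => hH k n) wt hwt
        (vt n) (hvt n) (hvtpos n) w hw
  · rw [hG wt]
    refine Finset.sum_congr rfl fun n _ => ?_
    have h1 : ∀ k : Fin K, vt n * wt k / wt k = vt n := fun k =>
      mul_div_cancel_right₀ (vt n) (hwt k).ne'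
    simp only [h1]
    rw [← Finset.sum_mul, ← Finset.sum_div, ← hvt n, div_self (hvtpos n).ne', one_mul]
end

section
/- (Auxiliary function for min-vol KL-NMF.) Let V ∈ ℝ^{F×N} have strictly positive entries, H ∈ ℝ_+^{K×N}, λ > 0, δ > 0, and let W̃ ∈ ℝ^{F×K} have strictly positive entries with (W̃H)_{fn} > 0 for all f, n. Set Y = (W̃ᵀW̃ + δI)⁻¹, write Y = Y⁺ − Y⁻ with Y⁺ = max(Y,0), Y⁻ = max(−Y,0) entrywise, and for each row index f let w̃_f denote the f-th row of W̃. Define F̄(W | W̃) = Σ_f G(w_f | w̃_f) + λ·( tr(Y(WᵀW + δI)) + logdet(Y⁻¹) − K ), where G(w_f | w̃_f) = Σ_n Σ_k (w̃_{fk} h_{kn}/(W̃H)_{fn})·d_KL(V_{fn} | (W̃H)_{fn} w_{fk}/w̃_{fk}) is the Jensen majorizer of the KL term on row f. Then for every W ∈ ℝ^{F×K} with strictly positive entries, F̄(W | W̃) ≥ F(W) := Σ_{f,n} d_KL(V_{fn} | (WH)_{fn}) + λ·logdet(WᵀW + δI), with equality when W = W̃. -/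
open Matrix

lemma trace_eq_sum_eigs {K : ℕ} {A : Matrix (Fin K) (Fin K) ℝ} (hA : A.IsHermitian) :
    A.trace = ∑ i, hA.eigenvalues i := by
  simpa using hA.trace_eq_sum_eigenvalues

section
open scoped MatrixOrder

lemma logdet_le {K : ℕ} {P Q : Matrix (Fin K) (Fin K) ℝ} (hP : P.PosDef) (hQ : Q.PosDef) :
    Real.log P.det ≤ (Q⁻¹ * P).trace + Real.log Q.det - K := by
  have hQi : (Q⁻¹).PosDef := hQ.inv
  set R := CFC.sqrt (Q⁻¹) with hRdef
  have hRR : R * R = Q⁻¹ := CFC.sqrt_mul_sqrt_self _ hQi.posSemidef.nonneg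
  have hRH : R.IsHermitian := (CFC.sqrt_nonneg (Q⁻¹)).posSemidef.isHermitian
  have hMsd : (R * P * R).PosSemidef := by
    have := hP.posSemidef.mul_mul_conjTranspose_same R
    rwa [hRH.eq] at this
  have hdetM : (R * P * R).det = Q⁻¹.det * P.det := by
    rw [det_mul, det_mul, ← hRR, det_mul]; ring
  have hdetQinv : Q⁻¹.det = (Q.det)⁻¹ := by rw [det_nonsing_inv, Ring.inverse_eq_inv']
  have hdetMpos : 0 < (R * P * R).det := by
    rw [hdetM, hdetQinv]
    exact mul_pos (inv_pos.mpr hQ.det_pos) hP.det_pos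
  set μ := hMsd.isHermitian.eigenvalues with hμdef
  have hprod : (R * P * R).det = ∏ i, μ i := by
    simpa using hMsd.isHermitian.det_eq_prod_eigenvalues
  have hμpos : ∀ i, 0 < μ i := by
    intro i
    rcases lt_or_eq_of_le (hMsd.eigenvalues_nonneg i) with h | h
    · exact h
    · exfalso
      have : (∏ i, μ i) = 0 := Finset.prod_eq_zero (Finset.mem_univ i) h.symm
      rw [← hprod] at this; linarith
  have htr : (R * P * R).trace = (Q⁻¹ * P).trace := by
    rw [mul_assoc, trace_mul_comm, mul_assoc, trace_mul_comm, hRR]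
  have htr2 : (R * P * R).trace = ∑ i, μ i := trace_eq_sum_eigs hMsd.isHermitian
  have hlog : Real.log (R * P * R).det = ∑ i, Real.log (μ i) := by
    rw [hprod, Real.log_prod]
    exact fun i _ => (hμpos i).ne'
  have key : Real.log (R * P * R).det ≤ (R * P * R).trace - K := by
    rw [hlog, htr2]
    have h1 : ∑ i, Real.log (μ i) ≤ ∑ i : Fin K, (μ i - 1) :=
      Finset.sum_le_sum fun i _ => Real.log_le_sub_one_of_pos (hμpos i)
    have h2 : ∑ i : Fin K, (μ i - 1) = (∑ i, μ i) - K := by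
      rw [Finset.sum_sub_distrib]; simp
    linarith
  have hlogM : Real.log (R * P * R).det = Real.log P.det - Real.log Q.det := by
    rw [hdetM, hdetQinv, Real.log_mul (inv_ne_zero hQ.det_pos.ne') hP.det_pos.ne',
      Real.log_inv]; ring
  rw [hlogM, htr] at key
  linarith

end

lemma jensen_kl (x : ℝ) (hx : 0 < x) {K : ℕ} (w y : Fin K → ℝ)
    (hw : ∀ k, 0 ≤ w k) (hsum : ∑ k, w k = 1) (hy : ∀ k, 0 < y k) :
    dKL x (∑ k, w k * y k) ≤ ∑ k, w k * dKL x (y k) := by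
  have hSpos : 0 < ∑ k, w k * y k := by
    have hne : ∃ k ∈ Finset.univ, 0 < w k * y k := by
      by_contra h
      push_neg at h
      have : ∀ k, w k = 0 := by
        intro k
        have := h k (Finset.mem_univ k)
        have hwy : 0 ≤ w k * y k := mul_nonneg (hw k) (hy k).le
        have : w k * y k = 0 := le_antisymm this hwy
        rcases mul_eq_zero.mp this with h' | h'
        · exact h'
        · exact absurd h' (hy k).ne'
      simp [this] at hsum
    exact Finset.sum_pos' (fun k _ => mul_nonneg (hw k) (hy k).le) hne
  have hS : ∑ k, w k * Real.log (y k) ≤ Real.log (∑ k, w k * y k) := by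
    have := (strictConcaveOn_log_Ioi.concaveOn).le_map_sum
      (t := Finset.univ) (w := w) (p := y)
      (fun i _ => hw i) hsum (fun i _ => hy i)
    simpa [smul_eq_mul] using this
  have hL : dKL x (∑ k, w k * y k)
      = x * Real.log x - x * Real.log (∑ k, w k * y k) - x + ∑ k, w k * y k := by
    unfold dKL; rw [Real.log_div hx.ne' hSpos.ne']; ring
  have hR : ∑ k, w k * dKL x (y k)
      = (x * Real.log x - x) - x * (∑ k, w k * Real.log (y k)) + ∑ k, w k * y k := by
    have : ∀ k, w k * dKL x (y k)
        = w k * (x * Real.log x - x) - x * (w k * Real.log (y k)) + w k * y k := by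
      intro k
      unfold dKL
      rw [Real.log_div hx.ne' (hy k).ne']
      ring
    rw [Finset.sum_congr rfl fun k _ => this k, Finset.sum_add_distrib,
      Finset.sum_sub_distrib, ← Finset.sum_mul, hsum, ← Finset.mul_sum]
    ring
  rw [hL, hR]
  nlinarith [mul_le_mul_of_nonneg_left hS hx.le]

lemma posDef_gram {F K : ℕ} (W : Matrix (Fin F) (Fin K) ℝ) {δ : ℝ} (hδ : 0 < δ) :
    (Wᵀ * W + δ • (1 : Matrix (Fin K) (Fin K) ℝ)).PosDef := by
  have h1 : (Wᵀ * W).PosSemidef := by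
    have := posSemidef_conjTranspose_mul_self W
    rwa [conjTranspose_eq_transpose_of_trivial] at this
  have h2 : (δ • (1 : Matrix (Fin K) (Fin K) ℝ)).PosDef := by
    rw [smul_one_eq_diagonal]
    exact (posDef_diagonal_iff).mpr fun _ => hδ
  exact Matrix.PosDef.posSemidef_add h1 h2

/-- Auxiliary function for min-vol KL-NMF: with `V > 0`, `H ≥ 0`, `λ, δ > 0`,
`W̃ > 0` with `W̃H > 0`, and `Y = (W̃ᵀW̃ + δI)⁻¹`, the function
`F̄(W|W̃) = Σ_f G(w_f|w̃_f) + λ(tr(Y(WᵀW + δI)) + logdet(Y⁻¹) − K)`,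
where `G` is the Jensen majorizer of the KL term on each row, satisfies
`F̄(W|W̃) ≥ F(W) = Σ_{f,n} d_KL(V_{fn} | (WH)_{fn}) + λ logdet(WᵀW + δI)`
for every entrywise positive `W`, with equality at `W = W̃`. -/
theorem minvol_KL_NMF_auxiliary {F K N : ℕ}
    (V : Matrix (Fin F) (Fin N) ℝ) (hV : ∀ f n, 0 < V f n)
    (H : Matrix (Fin K) (Fin N) ℝ) (hH : ∀ k n, 0 ≤ H k n)
    (lam δ : ℝ) (hlam : 0 < lam) (hδ : 0 < δ)
    (Wt : Matrix (Fin F) (Fin K) ℝ) (hWt : ∀ f k, 0 < Wt f k)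
    (hWtH : ∀ f n, 0 < (Wt * H) f n)
    (Y : Matrix (Fin K) (Fin K) ℝ)
    (hY : Y = (Wtᵀ * Wt + δ • (1 : Matrix (Fin K) (Fin K) ℝ))⁻¹)
    (Fobj Fbar : Matrix (Fin F) (Fin K) ℝ → ℝ)
    (hFobj : ∀ W, Fobj W =
      (∑ f, ∑ n, dKL (V f n) ((W * H) f n))
        + lam * Real.log (Wᵀ * W + δ • (1 : Matrix (Fin K) (Fin K) ℝ)).det)
    (hFbar : ∀ W, Fbar W =
      (∑ f, ∑ n, ∑ k,
        (Wt f k * H k n / (Wt * H) f n) * dKL (V f n) ((Wt * H) f n * W f k / Wt f k))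
        + lam * ((Y * (Wᵀ * W + δ • (1 : Matrix (Fin K) (Fin K) ℝ))).trace
            + Real.log (Y⁻¹).det - K)) :
    (∀ W : Matrix (Fin F) (Fin K) ℝ, (∀ f k, 0 < W f k) → Fobj W ≤ Fbar W) ∧
    Fbar Wt = Fobj Wt := by
  set Q : Matrix (Fin K) (Fin K) ℝ := Wtᵀ * Wt + δ • (1 : Matrix (Fin K) (Fin K) ℝ) with hQdef
  have hQ : Q.PosDef := posDef_gram Wt hδ
  have hQunit : IsUnit Q.det := hQ.det_pos.ne'.isUnit
  have hYinv : Y⁻¹ = Q := by rw [hY, Matrix.nonsing_inv_nonsing_inv _ hQunit]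
  have hsum1 : ∀ f n, ∑ k, Wt f k * H k n / (Wt * H) f n = 1 := by
    intro f n
    rw [← Finset.sum_div]
    rw [show ∑ k, Wt f k * H k n = (Wt * H) f n from (mul_apply).symm]
    exact div_self (hWtH f n).ne'
  constructor
  · intro W hW
    rw [hFobj, hFbar]
    set P : Matrix (Fin K) (Fin K) ℝ := Wᵀ * W + δ • (1 : Matrix (Fin K) (Fin K) ℝ) with hPdef
    have hP : P.PosDef := posDef_gram W hδ
    have hKL : (∑ f, ∑ n, dKL (V f n) ((W * H) f n))
        ≤ ∑ f, ∑ n, ∑ k,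
          (Wt f k * H k n / (Wt * H) f n) * dKL (V f n) ((Wt * H) f n * W f k / Wt f k) := by
      refine Finset.sum_le_sum fun f _ => Finset.sum_le_sum fun n _ => ?_
      set c := (Wt * H) f n with hcdef
      have hc : 0 < c := hWtH f n
      have hrepr : (W * H) f n = ∑ k, (Wt f k * H k n / c) * (c * W f k / Wt f k) := by
        rw [mul_apply]
        refine Finset.sum_congr rfl fun k _ => ?_
        field_simp [hc.ne', (hWt f k).ne']
      rw [hrepr]
      exact jensen_kl (V f n) (hV f n)
        (fun k => Wt f k * H k n / c) (fun k => c * W f k / Wt f k)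
        (fun k => div_nonneg (mul_nonneg (hWt f k).le (hH k n)) hc.le)
        (hsum1 f n)
        (fun k => div_pos (mul_pos hc (hW f k)) (hWt f k))
    have hLD : Real.log P.det ≤ (Y * P).trace + Real.log (Y⁻¹).det - K := by
      rw [hYinv, hY]
      exact logdet_le hP hQ
    have := mul_le_mul_of_nonneg_left hLD hlam.le
    linarith
  · rw [hFobj, hFbar]
    have hKLeq : (∑ f, ∑ n, ∑ k,
        (Wt f k * H k n / (Wt * H) f n) * dKL (V f n) ((Wt * H) f n * Wt f k / Wt f k))
        = ∑ f, ∑ n, dKL (V f n) ((Wt * H) f n) := by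
      refine Finset.sum_congr rfl fun f _ => Finset.sum_congr rfl fun n _ => ?_
      have h1 : ∀ k, (Wt * H) f n * Wt f k / Wt f k = (Wt * H) f n := by
        intro k
        rw [mul_div_assoc, div_self (hWt f k).ne', mul_one]
      rw [Finset.sum_congr rfl fun k _ => by rw [h1 k], ← Finset.sum_mul, hsum1 f n, one_mul]
    have htr : (Y * Q).trace = (K : ℝ) := by
      rw [hY, Matrix.nonsing_inv_mul _ hQunit, trace_one]
      simp
    rw [hKLeq, hYinv, htr]
    ring
end

section
/- Let A ∈ ℝ^{K×K} satisfy eᵀA = eᵀ (A is column stochastic, i.e., each column sums to one) and suppose every row a_j of A satisfies ‖a_j‖₂ ≤ a_jᵀe. Then |det(A)| ≤ 1. (The proof combines the Hadamard inequality |det(A)| ≤ Π_j ‖a_j‖₂, the hypothesis ‖a_j‖₂ ≤ a_jᵀe, and the arithmetic–geometric mean inequality Π_j (a_jᵀe) ≤ ((Σ_j a_jᵀe)/K)^K = (eᵀAe/K)^K = 1.) -/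
open Matrix

/-- Hadamard's inequality for rows. -/
lemma hadamard_rows {K : ℕ} (A : Matrix (Fin K) (Fin K) ℝ) :
    |A.det| ≤ ∏ j, Real.sqrt (∑ i, (A j i) ^ 2) := by
  classical
  rcases Nat.eq_zero_or_pos K with hK | hK
  · subst hK
    simp [Matrix.det_fin_zero]
  haveI : NeZero K := ⟨hK.ne'⟩
  set E := EuclideanSpace ℝ (Fin K)
  have h : Module.finrank ℝ E = Fintype.card (Fin K) :=
    finrank_euclideanSpace_fin.trans (Fintype.card_fin K).symm
  set f : Fin K → E := fun i => (WithLp.equiv 2 _).symm (A i) with hf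
  have hnorm : ∀ i, ‖f i‖ = Real.sqrt (∑ j, (A i j) ^ 2) := by
    intro i
    rw [EuclideanSpace.norm_eq]
    congr 1
    refine Finset.sum_congr rfl fun j _ => ?_
    simp [f, sq_abs]
  set b0 := EuclideanSpace.basisFun (Fin K) ℝ
  have hdet : b0.toBasis.det f = A.det := by
    rw [Module.Basis.det_apply]
    have : b0.toBasis.toMatrix f = Aᵀ := by
      ext i j
      simp [Module.Basis.toMatrix_apply, f, b0, Matrix.transpose_apply]
    rw [this, Matrix.det_transpose]
  set gb : OrthonormalBasis (Fin K) ℝ E := @InnerProductSpace.gramSchmidtOrthonormalBasis ℝ _ _ _ _ (Fin K) _ _ Finite.to_wellFoundedLT _ _ h f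
  have key : b0.toBasis.det f = (b0.toBasis.det gb.toBasis) * gb.toBasis.det f := by
    have := AlternatingMap.eq_smul_basis_det gb.toBasis (b0.toBasis.det)
    calc b0.toBasis.det f = (b0.toBasis.det gb.toBasis • gb.toBasis.det) f := by rw [← this]
    _ = _ := by simp
  have hgs : gb.toBasis.det f = ∏ i, inner ℝ (gb i) (f i) :=
    @InnerProductSpace.gramSchmidtOrthonormalBasis_det ℝ _ _ _ _ (Fin K) _ _ Finite.to_wellFoundedLT _ _ h f _
  have h1 : |b0.toBasis.det ⇑gb.toBasis| = 1 := by
    rw [gb.coe_toBasis]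
    rcases b0.det_to_matrix_orthonormalBasis_real gb with h' | h' <;> rw [h'] <;> norm_num
  calc |A.det| = |b0.toBasis.det gb.toBasis| * |gb.toBasis.det f| := by
        rw [← hdet, key, abs_mul]
    _ = |∏ i, inner ℝ (gb i) (f i)| := by rw [h1, one_mul, hgs]
    _ ≤ ∏ i, ‖f i‖ := by
        rw [Finset.abs_prod]
        refine Finset.prod_le_prod (fun i _ => abs_nonneg _) fun i _ => ?_
        calc |(inner ℝ (gb i) (f i) : ℝ)| ≤ ‖gb i‖ * ‖f i‖ := abs_real_inner_le_norm _ _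
          _ = ‖f i‖ := by rw [gb.orthonormal.1 i, one_mul]
    _ = ∏ j, Real.sqrt (∑ i, (A j i) ^ 2) := by
        exact Finset.prod_congr rfl fun i _ => hnorm i

/-- If `A ∈ ℝ^{K×K}` is column stochastic (`eᵀA = eᵀ`, i.e. each column sums to one)
and every row `a_j` of `A` satisfies `‖a_j‖₂ ≤ a_jᵀe`, then `|det(A)| ≤ 1`. -/
theorem abs_det_le_one_of_column_stochastic {K : ℕ}
    (A : Matrix (Fin K) (Fin K) ℝ)
    (hcol : ∀ j, ∑ i, A i j = 1)
    (hrow : ∀ j, Real.sqrt (∑ i, (A j i) ^ 2) ≤ ∑ i, A j i) :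
    |A.det| ≤ 1 := by
  rcases Nat.eq_zero_or_pos K with hK | hK
  · subst hK
    simp [Matrix.det_fin_zero]
  set s : Fin K → ℝ := fun j => ∑ i, A j i with hs
  have hs0 : ∀ j, 0 ≤ s j := fun j => le_trans (Real.sqrt_nonneg _) (hrow j)
  have hsum : ∑ j, s j = (K : ℝ) := by
    simp only [hs]
    refine Finset.sum_comm.trans ?_
    simp [hcol]
  have hprod : ∏ j, s j ≤ 1 := by
    have hw : ∑ _j : Fin K, ((K : ℝ))⁻¹ = 1 := by
      simp
      field_simp
    have h2 : ∏ j, (s j) ^ ((K : ℝ))⁻¹ ≤ ∑ j, ((K : ℝ))⁻¹ * s j :=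
      Real.geom_mean_le_arith_mean_weighted Finset.univ _ s
        (fun i _ => by positivity) hw (fun i _ => hs0 i)
    have h3 : ∑ j, ((K : ℝ))⁻¹ * s j = 1 := by
      rw [← Finset.mul_sum, hsum]
      field_simp
    rw [h3] at h2
    have h4 : (∏ j, s j) ^ ((K : ℝ))⁻¹ ≤ 1 := by
      rwa [← Real.finset_prod_rpow _ _ (fun i _ => hs0 i)]
    by_contra hcon
    push_neg at hcon
    have : (1 : ℝ) < (∏ j, s j) ^ ((K : ℝ))⁻¹ :=
      (Real.one_lt_rpow_iff_of_pos (lt_trans one_pos hcon)).mpr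
        (Or.inl ⟨hcon, by positivity⟩)
    linarith
  calc |A.det| ≤ ∏ j, Real.sqrt (∑ i, (A j i) ^ 2) := hadamard_rows A
    _ ≤ ∏ j, s j := Finset.prod_le_prod (fun j _ => Real.sqrt_nonneg _) (fun j _ => hrow j)
    _ ≤ 1 := hprod
end
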